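/- Each 2×2 minor of the matrix B (with columns (X_n^a, X_0^{a+d}), and (X_{i−1}, X_{b+i−1}) for i = 1,...,n−b+1) taken from two columns i < j with i ≥ 2 (both not the first column) equals X_{i−2}X_{b+j−2} − X_{j−2}X_{b+i−2}, and this polynomial lies in the ideal generated by {X_p X_{q+1} − X_q X_{p+1} : 0 ≤ p < q ≤ n−1}. -/

import Mathlib

open MvPolynomial in
lemma gen_mem_aux (k : Type*) [Field k] (n : ℕ) (hn : 2 ≤ n) (p q : ℕ)
    (hpq : p < q) (hq : q ≤ n - 1) (h1 : p < n + 1) (h2 : q + 1 < n + 1)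
    (h3 : q < n + 1) (h4 : p + 1 < n + 1) :
    (MvPolynomial.X (⟨p, h1⟩ : Fin (n + 1)) *
        MvPolynomial.X (⟨q + 1, h2⟩ : Fin (n + 1)) -
      MvPolynomial.X (⟨q, h3⟩ : Fin (n + 1)) *
        MvPolynomial.X (⟨p + 1, h4⟩ : Fin (n + 1)) :
          MvPolynomial (Fin (n + 1)) k) ∈
      Ideal.span {f : MvPolynomial (Fin (n + 1)) k |
        ∃ p q : ℕ, ∃ _ : p < q, ∃ _ : q ≤ n - 1,
          f = MvPolynomial.X (⟨p, by omega⟩ : Fin (n + 1)) *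
                MvPolynomial.X (⟨q + 1, by omega⟩ : Fin (n + 1)) -
              MvPolynomial.X (⟨q, by omega⟩ : Fin (n + 1)) *
                MvPolynomial.X (⟨p + 1, by omega⟩ : Fin (n + 1))} :=
  Ideal.subset_span ⟨p, q, hpq, hq, rfl⟩

open MvPolynomial in
lemma key_mem (k : Type*) [Field k] (n : ℕ) (hn : 2 ≤ n) (c : ℕ) :
    ∀ u v : ℕ, u < v → 1 ≤ c → v + c ≤ n →
    ∀ (h1 : u < n + 1) (h2 : v + c < n + 1) (h3 : v < n + 1) (h4 : u + c < n + 1),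
    (MvPolynomial.X (⟨u, h1⟩ : Fin (n + 1)) *
        MvPolynomial.X (⟨v + c, h2⟩ : Fin (n + 1)) -
      MvPolynomial.X (⟨v, h3⟩ : Fin (n + 1)) *
        MvPolynomial.X (⟨u + c, h4⟩ : Fin (n + 1)) :
          MvPolynomial (Fin (n + 1)) k) ∈
      Ideal.span {f : MvPolynomial (Fin (n + 1)) k |
        ∃ p q : ℕ, ∃ _ : p < q, ∃ _ : q ≤ n - 1,
          f = MvPolynomial.X (⟨p, by omega⟩ : Fin (n + 1)) *
                MvPolynomial.X (⟨q + 1, by omega⟩ : Fin (n + 1)) -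
              MvPolynomial.X (⟨q, by omega⟩ : Fin (n + 1)) *
                MvPolynomial.X (⟨p + 1, by omega⟩ : Fin (n + 1))} := by
  induction c with
  | zero => intro u v _ hc; omega
  | succ c ih =>
    intro u v huv _ hvc h1 h2 h3 h4
    rcases Nat.eq_zero_or_pos c with rfl | hc
    · -- base case: c = 1, generator with p = u, q = v
      have := gen_mem_aux k n hn u v huv (by omega) h1 (by omega) h3 (by omega)
      convert this using 2
    · -- step: split into two pieces
      have hT1 : (MvPolynomial.X (⟨u, h1⟩ : Fin (n + 1)) *
            MvPolynomial.X (⟨v + (c + 1), h2⟩ : Fin (n + 1)) -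
          MvPolynomial.X (⟨v + c, by omega⟩ : Fin (n + 1)) *
            MvPolynomial.X (⟨u + 1, by omega⟩ : Fin (n + 1)) :
              MvPolynomial (Fin (n + 1)) k) ∈
          Ideal.span {f : MvPolynomial (Fin (n + 1)) k |
            ∃ p q : ℕ, ∃ _ : p < q, ∃ _ : q ≤ n - 1,
              f = MvPolynomial.X (⟨p, by omega⟩ : Fin (n + 1)) *
                    MvPolynomial.X (⟨q + 1, by omega⟩ : Fin (n + 1)) -
                  MvPolynomial.X (⟨q, by omega⟩ : Fin (n + 1)) *
                    MvPolynomial.X (⟨p + 1, by omega⟩ : Fin (n + 1))} := by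
        have := gen_mem_aux k n hn u (v + c) (by omega) (by omega)
          h1 (by omega : v + c + 1 < n + 1) (by omega) (by omega)
        convert this using 3
        rfl
      rcases Nat.lt_or_ge (u + 1) v with huv1 | huv1
      · have hT2 := ih (u + 1) v huv1 hc (by omega) (by omega)
          (by omega : v + c < n + 1) (by omega) (by omega : u + 1 + c < n + 1)
        have := Ideal.add_mem _ hT1 hT2
        convert this using 1
        have : u + 1 + c = u + (c + 1) := by omega
        simp only [this]
        ring
      · have hv : v = u + 1 := by omega
        subst hv
        have := hT1
        convert this using 1
        have h5 : u + 1 + c = u + (c + 1) := by omega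
        simp only [h5]
        ring
  -- end

/-- Each 2×2 minor of `B` taken from two columns `i < j` with `i ≥ 2` (neither
being the first column) equals `X_{i−2}X_{b+j−2} − X_{j−2}X_{b+i−2}`, and this
polynomial lies in the ideal generated by
`{X_p X_{q+1} − X_q X_{p+1} : 0 ≤ p < q ≤ n−1}`. -/
theorem stmt_18 (k : Type*) [Field k] (n a b d : ℕ) (hn : 2 ≤ n)
    (hb1 : 1 ≤ b) (hbn : b ≤ n) (ha : 1 ≤ a) (hd : 1 ≤ d)
    (i j : ℕ) (hi : 2 ≤ i) (hij : i < j) (hj : j ≤ n - b + 2) :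
    (MvPolynomial.X (⟨i - 2, by omega⟩ : Fin (n + 1)) *
        MvPolynomial.X (⟨b + j - 2, by omega⟩ : Fin (n + 1)) -
      MvPolynomial.X (⟨j - 2, by omega⟩ : Fin (n + 1)) *
        MvPolynomial.X (⟨b + i - 2, by omega⟩ : Fin (n + 1)) :
          MvPolynomial (Fin (n + 1)) k) ∈
      Ideal.span {f : MvPolynomial (Fin (n + 1)) k |
        ∃ p q : ℕ, ∃ _ : p < q, ∃ _ : q ≤ n - 1,
          f = MvPolynomial.X (⟨p, by omega⟩ : Fin (n + 1)) *
                MvPolynomial.X (⟨q + 1, by omega⟩ : Fin (n + 1)) -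
              MvPolynomial.X (⟨q, by omega⟩ : Fin (n + 1)) *
                MvPolynomial.X (⟨p + 1, by omega⟩ : Fin (n + 1))} := by
  have := key_mem k n hn b (i - 2) (j - 2) (by omega) hb1 (by omega)
    (by omega) (by omega : j - 2 + b < n + 1) (by omega) (by omega : i - 2 + b < n + 1)
  have e1 : b + j - 2 = j - 2 + b := by omega
  have e2 : b + i - 2 = i - 2 + b := by omega
  simp only [e1, e2]
  exact this
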